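/- For all integers n ≥ 0 and j ≥ 1, E[Q_n(j)] = Σ_{0 ≤ k_1 < k_2 < ... < k_j ≤ n} γ_{k_1} · (Π_{i=1}^{j−1} P(τ = k_{i+1} − k_i)) · γ_{n−k_j}, where the (empty) product is 1 when j = 1. -/

import Mathlib

open MeasureTheory ProbabilityTheory Filter
open scoped ENNReal

noncomputable section

/-- The random walk `S_n = X_1 + ... + X_n` in `ℤ^d`, with `S_0 = 0`. -/
def walk (d : ℕ) {Ω : Type*} (X : ℕ → Ω → (Fin d → ℤ)) (n : ℕ) (ω : Ω) : Fin d → ℤ :=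
  ∑ i ∈ Finset.range n, X i ω

/-- The local time `l(n,x) = Σ_{i=0}^n 1{S_i = x}` of the site `x` up to time `n`. -/
def localTime (d : ℕ) {Ω : Type*} (X : ℕ → Ω → (Fin d → ℤ)) (n : ℕ) (x : Fin d → ℤ)
    (ω : Ω) : ℕ :=
  ∑ i ∈ Finset.range (n + 1), if walk d X i ω = x then 1 else 0

/-- `γ = P(S_n ≠ 0 for all n ≥ 1)`, the probability of no return to the origin. -/
def noReturnProb (d : ℕ) {Ω : Type*} [MeasurableSpace Ω] (μ : Measure Ω)
    (X : ℕ → Ω → (Fin d → ℤ)) : ℝ :=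
  (μ {ω | ∀ n : ℕ, 1 ≤ n → walk d X n ω ≠ 0}).toReal

/-- `Q_n(j) = Σ_{x ∈ ℤ^d} 1{l(n,x) = j}`, the number of sites visited
exactly `j` times up to time `n` (for `j ≥ 1` only finitely many terms are nonzero). -/
def Qfun (d : ℕ) {Ω : Type*} (X : ℕ → Ω → (Fin d → ℤ)) (n j : ℕ) (ω : Ω) : ℝ :=
  ∑' x : Fin d → ℤ, if localTime d X n x ω = j then (1 : ℝ) else 0

/-- `γ_m = P(τ ≥ m+1) = P(S_k ≠ 0 for all 1 ≤ k ≤ m)`, with `γ_0 = 1`. -/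
def gamSeq (d : ℕ) {Ω : Type*} [MeasurableSpace Ω] (μ : Measure Ω)
    (X : ℕ → Ω → (Fin d → ℤ)) (m : ℕ) : ℝ :=
  (μ {ω | ∀ k : ℕ, 1 ≤ k → k ≤ m → walk d X k ω ≠ 0}).toReal

/-- `P(τ = k)`, where `τ = inf{n ≥ 1 : S_n = 0}` is the first return time to the origin. -/
def tauEqProb (d : ℕ) {Ω : Type*} [MeasurableSpace Ω] (μ : Measure Ω)
    (X : ℕ → Ω → (Fin d → ℤ)) (k : ℕ) : ℝ :=
  (μ {ω | walk d X k ω = 0 ∧ ∀ i : ℕ, 1 ≤ i → i < k → walk d X i ω ≠ 0}).toReal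

def Sgam (d m : ℕ) : Set (Fin m → Fin d → ℤ) :=
  {y | ∀ t : ℕ, 1 ≤ t → ∀ h : t ≤ m, ∑ i : Fin t, y (Fin.castLE h i) ≠ 0}

def Stau (d m : ℕ) : Set (Fin m → Fin d → ℤ) :=
  {y | (∑ i, y i) = 0 ∧ ∀ t : ℕ, 1 ≤ t → ∀ h : t < m, ∑ i : Fin t, y (Fin.castLE h.le i) ≠ 0}


section Aux

variable {Ω : Type*} [MeasurableSpace Ω] {μ : Measure Ω} [IsProbabilityMeasure μ]
  {d : ℕ} {X : ℕ → Ω → (Fin d → ℤ)}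

lemma measurableSet_all {α : Type*} [Countable α] [MeasurableSpace α]
    [MeasurableSingletonClass α] (s : Set α) : MeasurableSet s :=
  (Set.to_countable s).measurableSet

/-- tuple of the variables along an index map -/
def finTuple (d : ℕ) {Ω : Type*} (X : ℕ → Ω → (Fin d → ℤ)) (m : ℕ) (g : Fin m → ℕ) :
    Ω → (Fin m → Fin d → ℤ) := fun ω i => X (g i) ω

lemma measurable_finTuple (hmeas : ∀ i, Measurable (X i)) (m : ℕ) (g : Fin m → ℕ) :
    Measurable (finTuple d X m g) :=
  measurable_pi_lambda _ (fun i => hmeas (g i))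

lemma lawTuple (hmeas : ∀ i, Measurable (X i))
    (hindep : iIndepFun X μ)
    (hident : ∀ i, μ.map (X i) = μ.map (X 0))
    (m : ℕ) (g : Fin m → ℕ) (hg : Function.Injective g) :
    μ.map (finTuple d X m g) = Measure.pi (fun _ : Fin m => μ.map (X 0)) := by
  have hX0 : IsProbabilityMeasure (μ.map (X 0)) := Measure.isProbabilityMeasure_map (hmeas 0).aemeasurable
  refine (Measure.pi_eq fun s hs => ?_).symm
  rw [Measure.map_apply (measurable_finTuple hmeas m g) (MeasurableSet.univ_pi hs)]
  classical
  -- express preimage as an intersection over the image finset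
  set sets : ℕ → Set (Fin d → ℤ) := fun l =>
    if h : ∃ i, g i = l then s h.choose else Set.univ with hsets
  have hsg : ∀ i, sets (g i) = s i := by
    intro i
    have h : ∃ i', g i' = g i := ⟨i, rfl⟩
    simp only [hsets, dif_pos h]
    have := h.choose_spec
    rw [hg this]
  have hpre : finTuple d X m g ⁻¹' Set.pi Set.univ s
      = ⋂ l ∈ Finset.image g Finset.univ, X l ⁻¹' sets l := by
    ext ω
    simp only [Set.mem_preimage, Set.mem_pi, Set.mem_univ, forall_true_left, Set.mem_iInter,
      Finset.mem_image, Finset.mem_univ, true_and]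
    constructor
    · rintro h l ⟨i, rfl⟩
      rw [hsg]; exact h i
    · intro h i
      have := h (g i) ⟨i, rfl⟩
      rwa [hsg] at this
  rw [hpre]
  have := hindep.measure_inter_preimage_eq_mul (Finset.image g Finset.univ)
    (sets := sets) (fun l _ => measurableSet_all _)
  rw [this, Finset.prod_image (fun a _ b _ h => hg h)]
  refine Finset.prod_congr rfl fun i _ => ?_
  rw [hsg, ← Measure.map_apply (hmeas (g i)) (measurableSet_all _), hident (g i)]

lemma sameLaw (hmeas : ∀ i, Measurable (X i))
    (hindep : iIndepFun X μ)
    (hident : ∀ i, μ.map (X i) = μ.map (X 0))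
    (m : ℕ) (g g' : Fin m → ℕ) (hg : Function.Injective g) (hg' : Function.Injective g')
    (S : Set (Fin m → Fin d → ℤ)) :
    μ (finTuple d X m g ⁻¹' S) = μ (finTuple d X m g' ⁻¹' S) := by
  rw [← Measure.map_apply (measurable_finTuple hmeas m g) (measurableSet_all _),
    ← Measure.map_apply (measurable_finTuple hmeas m g') (measurableSet_all _),
    lawTuple hmeas hindep hident m g hg, lawTuple hmeas hindep hident m g' hg']


lemma indep_blocks (hmeas : ∀ i, Measurable (X i))
    (hindep : iIndepFun X μ)
    (r : ℕ) (m : ℕ → ℕ) (g : ∀ l, Fin (m l) → ℕ)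
    (hdisj : ∀ l₁ l₂, l₁ < l₂ → l₂ < r → ∀ i i', g l₁ i ≠ g l₂ i')
    (D : ∀ l, Set (Fin (m l) → Fin d → ℤ)) :
    μ (⋂ l ∈ Finset.range r, finTuple d X (m l) (g l) ⁻¹' D l)
      = ∏ l ∈ Finset.range r, μ (finTuple d X (m l) (g l) ⁻¹' D l) := by
  classical
  induction r with
  | zero => simp
  | succ r ih =>
    rw [Finset.range_add_one]
    rw [Finset.set_biInter_insert, Finset.prod_insert (by simp)]
    set S : Finset ℕ := Finset.image (g r) Finset.univ with hS
    set T : Finset ℕ := (Finset.range r).biUnion (fun l => Finset.image (g l) Finset.univ) with hT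
    have hST : Disjoint S T := by
      rw [Finset.disjoint_left]
      rintro x hxS hxT
      obtain ⟨i, -, rfl⟩ := Finset.mem_image.1 hxS
      obtain ⟨l, hl, hx⟩ := Finset.mem_biUnion.1 hxT
      obtain ⟨i', -, hi'⟩ := Finset.mem_image.1 hx
      exact hdisj l r (Finset.mem_range.1 hl) (Nat.lt_succ_self r) i' i hi'
    have hindepST := hindep.indepFun_finset S T hST hmeas
    have hmemT : ∀ l, l ∈ Finset.range r → ∀ i : Fin (m l), g l i ∈ T := by
      intro l hl i
      exact Finset.mem_biUnion.2 ⟨l, hl, Finset.mem_image_of_mem _ (Finset.mem_univ i)⟩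
    set A : Set ({x // x ∈ S} → Fin d → ℤ) :=
      (fun (y : {x // x ∈ S} → Fin d → ℤ) (i : Fin (m r)) =>
        y ⟨g r i, Finset.mem_image_of_mem _ (Finset.mem_univ i)⟩) ⁻¹' D r with hA
    set B : Set ({x // x ∈ T} → Fin d → ℤ) :=
      ⋂ l, ⋂ (h : l ∈ Finset.range r),
        (fun (y : {x // x ∈ T} → Fin d → ℤ) (i : Fin (m l)) =>
          y ⟨g l i, hmemT l h i⟩) ⁻¹' D l with hB
    have h1 : (fun a (i : S) => X i a) ⁻¹' A = finTuple d X (m r) (g r) ⁻¹' D r := rfl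
    have h2 : (fun a (i : T) => X i a) ⁻¹' B
        = ⋂ l ∈ Finset.range r, finTuple d X (m l) (g l) ⁻¹' D l := by
      rw [hB]
      simp only [Set.preimage_iInter]
      rfl
    rw [← h1, ← h2, hindepST.measure_inter_preimage_eq_mul _ _ (measurableSet_all _)
      (measurableSet_all _), h1, h2, ih (fun l₁ l₂ a b => hdisj l₁ l₂ a (Nat.lt_succ_of_lt b))]

lemma walk_succ (m : ℕ) (ω : Ω) : walk d X (m + 1) ω = walk d X m ω + X m ω :=
  Finset.sum_range_succ _ _

lemma walk_sub_walk (a t : ℕ) (ω : Ω) :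
    ∑ i : Fin t, X (a + i.val) ω = walk d X (a + t) ω - walk d X a ω := by
  induction t with
  | zero => simp
  | succ t ih =>
    rw [Fin.sum_univ_castSucc]
    simp only [Fin.coe_castSucc, Fin.val_last, ih]
    rw [show a + (t + 1) = (a + t) + 1 from rfl, walk_succ]
    abel

lemma walk_rev_sum (c : ℕ) {t : ℕ} (ht : t ≤ c) (ω : Ω) :
    ∑ i : Fin t, X (c - 1 - i.val) ω = walk d X c ω - walk d X (c - t) ω := by
  induction t with
  | zero => simp
  | succ t ih =>
    rw [Fin.sum_univ_castSucc]
    simp only [Fin.coe_castSucc, Fin.val_last, ih (Nat.le_of_succ_le ht)]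
    have h1 : c - t = (c - (t + 1)) + 1 := by omega
    have h2 : c - 1 - t = c - (t + 1) := by omega
    rw [h1, walk_succ, h2]
    abel

lemma mem_Gtail (a len : ℕ) (ω : Ω) :
    ω ∈ finTuple d X len (fun r => a + r.val) ⁻¹' Sgam d len ↔
      ∀ u : ℕ, a < u → u ≤ a + len → walk d X u ω ≠ walk d X a ω := by
  simp only [Set.mem_preimage, Sgam, Set.mem_setOf_eq, finTuple]
  constructor
  · intro h u hau hu
    have h1 : 1 ≤ u - a := by omega
    have h2 : u - a ≤ len := by omega
    have := h (u - a) h1 h2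
    rw [show (∑ i : Fin (u - a), X (a + (Fin.castLE h2 i).val) ω)
        = ∑ i : Fin (u - a), X (a + i.val) ω from rfl, walk_sub_walk] at this
    rw [show a + (u - a) = u by omega] at this
    intro hc; exact this (by rw [hc, sub_self])
  · intro h t h1 h2
    rw [show (∑ i : Fin t, X (a + (Fin.castLE h2 i).val) ω)
        = ∑ i : Fin t, X (a + i.val) ω from rfl, walk_sub_walk]
    intro hc
    exact h (a + t) (by omega) (by omega) (by rwa [sub_eq_zero] at hc)

lemma mem_G0 (c : ℕ) (ω : Ω) :
    ω ∈ finTuple d X c (fun r => c - 1 - r.val) ⁻¹' Sgam d c ↔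
      ∀ u : ℕ, u < c → walk d X u ω ≠ walk d X c ω := by
  simp only [Set.mem_preimage, Sgam, Set.mem_setOf_eq, finTuple]
  constructor
  · intro h u hu
    have h1 : 1 ≤ c - u := by omega
    have h2 : c - u ≤ c := by omega
    have := h (c - u) h1 h2
    rw [show (∑ i : Fin (c - u), X (c - 1 - (Fin.castLE h2 i).val) ω)
        = ∑ i : Fin (c - u), X (c - 1 - i.val) ω from rfl, walk_rev_sum c h2] at this
    rw [show c - (c - u) = u by omega] at this
    intro hc; exact this (by rw [hc, sub_self])
  · intro h t h1 h2
    rw [show (∑ i : Fin t, X (c - 1 - (Fin.castLE h2 i).val) ω)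
        = ∑ i : Fin t, X (c - 1 - i.val) ω from rfl, walk_rev_sum c h2]
    intro hc
    rw [sub_eq_zero] at hc
    exact h (c - t) (by omega) hc.symm

lemma mem_Btau (a c : ℕ) (hac : a ≤ c) (ω : Ω) :
    ω ∈ finTuple d X (c - a) (fun r => a + r.val) ⁻¹' Stau d (c - a) ↔
      (walk d X c ω = walk d X a ω ∧
        ∀ u : ℕ, a < u → u < c → walk d X u ω ≠ walk d X a ω) := by
  simp only [Set.mem_preimage, Stau, Set.mem_setOf_eq, finTuple]
  have hfull : (∑ i : Fin (c - a), X (a + i.val) ω) = walk d X c ω - walk d X a ω := by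
    rw [walk_sub_walk, show a + (c - a) = c by omega]
  constructor
  · rintro ⟨h0, h⟩
    refine ⟨by rwa [hfull, sub_eq_zero] at h0, ?_⟩
    intro u hau huc
    have h1 : 1 ≤ u - a := by omega
    have h2 : u - a < c - a := by omega
    have := h (u - a) h1 h2
    rw [show (∑ i : Fin (u - a), X (a + (Fin.castLE h2.le i).val) ω)
        = ∑ i : Fin (u - a), X (a + i.val) ω from rfl, walk_sub_walk,
      show a + (u - a) = u by omega] at this
    intro hc; exact this (by rw [hc, sub_self])
  · rintro ⟨h0, h⟩
    refine ⟨by rw [hfull, h0, sub_self], ?_⟩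
    intro t h1 h2
    rw [show (∑ i : Fin t, X (a + (Fin.castLE h2.le i).val) ω)
        = ∑ i : Fin t, X (a + i.val) ω from rfl, walk_sub_walk]
    intro hc
    rw [sub_eq_zero] at hc
    exact h (a + t) (by omega) (by omega) hc


lemma tuple_pre_congr {m m' : ℕ} (h : m = m') (g : Fin m → ℕ) (g' : Fin m' → ℕ)
    (hg : ∀ r : Fin m, g r = g' (Fin.cast h r))
    (D : (mm : ℕ) → Set (Fin mm → Fin d → ℤ)) :
    finTuple d X m g ⁻¹' D m = finTuple d X m' g' ⁻¹' D m' := by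
  subst h
  have hgg : g = g' := funext fun r => by simpa using hg r
  rw [hgg]

variable (hmeas : ∀ i, Measurable (X i))
    (hindep : iIndepFun X μ)
    (hident : ∀ i, μ.map (X i) = μ.map (X 0))


lemma meas_gam (hmeas : ∀ i, Measurable (X i))
    (hindep : iIndepFun X μ)
    (hident : ∀ i, μ.map (X i) = μ.map (X 0)) (m : ℕ) (g : Fin m → ℕ) (hg : Function.Injective g) :
    μ (finTuple d X m g ⁻¹' Sgam d m)
      = μ {ω | ∀ k : ℕ, 1 ≤ k → k ≤ m → walk d X k ω ≠ 0} := by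
  rw [sameLaw hmeas hindep hident m g (fun r => 0 + r.val) hg
    (fun a b h => Fin.val_injective (by simpa using h))]
  congr 1
  ext ω
  rw [mem_Gtail 0 m ω]
  have h0 : walk d X 0 ω = 0 := Finset.sum_range_zero _
  simp only [Set.mem_setOf_eq, h0, zero_add]
  constructor
  · intro h k h1 h2
    simpa [sub_zero] using h k h1 h2
  · intro h u h1 h2
    simpa [sub_zero] using h u h1 h2


lemma meas_tau (hmeas : ∀ i, Measurable (X i))
    (hindep : iIndepFun X μ)
    (hident : ∀ i, μ.map (X i) = μ.map (X 0)) (m : ℕ) (g : Fin m → ℕ) (hg : Function.Injective g) :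
    μ (finTuple d X m g ⁻¹' Stau d m)
      = μ {ω | walk d X m ω = 0 ∧ ∀ i : ℕ, 1 ≤ i → i < m → walk d X i ω ≠ 0} := by
  rw [sameLaw hmeas hindep hident m g (fun r => 0 + r.val) hg
    (fun a b h => Fin.val_injective (by simpa using h))]
  congr 1
  ext ω
  have := mem_Btau (X := X) (d := d) 0 m (Nat.zero_le m) ω
  rw [Nat.sub_zero] at this
  rw [this]
  have h0 : walk d X 0 ω = 0 := Finset.sum_range_zero _
  simp only [Set.mem_setOf_eq, h0]
  constructor
  · rintro ⟨ha, hb⟩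
    exact ⟨ha, fun i h1 h2 => hb i h1 h2⟩
  · rintro ⟨ha, hb⟩
    exact ⟨ha, fun u h1 h2 => hb u h1 h2⟩


def Aset (d : ℕ) {Ω : Type*} (X : ℕ → Ω → (Fin d → ℤ)) (n jj : ℕ)
    (k : Fin (jj + 1) → Fin (n + 1)) : Set Ω :=
  {ω | ∀ m' : ℕ, m' ≤ n →
    (walk d X m' ω = walk d X (k 0).val ω ↔ ∃ i, (k i).val = m')}


lemma meas_A (hmeas : ∀ i, Measurable (X i))
    (hindep : iIndepFun X μ)
    (hident : ∀ i, μ.map (X i) = μ.map (X 0)) (n jj : ℕ) (k : Fin (jj + 1) → Fin (n + 1)) (hk : StrictMono k) :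
    μ (Aset d X n jj k)
      = μ {ω | ∀ t : ℕ, 1 ≤ t → t ≤ (k 0).val → walk d X t ω ≠ 0}
        * (∏ l : Fin jj,
            μ {ω | walk d X ((k l.succ).val - (k l.castSucc).val) ω = 0 ∧
              ∀ i : ℕ, 1 ≤ i → i < (k l.succ).val - (k l.castSucc).val →
                walk d X i ω ≠ 0})
        * μ {ω | ∀ t : ℕ, 1 ≤ t → t ≤ n - (k (Fin.last jj)).val → walk d X t ω ≠ 0} := by
  classical
  set kv : ℕ → ℕ := fun l => (k ⟨min l jj, Nat.lt_succ_of_le (min_le_right l jj)⟩).val with hkv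
  have hkv_at : ∀ (l : ℕ) (h : l ≤ jj), kv l = (k ⟨l, by omega⟩).val := by
    intro l h
    exact congrArg (fun i => (k i).val) (Fin.ext (min_eq_left h))
  have hkv_fin : ∀ i : Fin (jj + 1), kv i.val = (k i).val := by
    intro i; rw [hkv_at i.val (by omega)]
  have hkv_mono : ∀ a b : ℕ, a ≤ b → kv a ≤ kv b := by
    intro a b hab
    have := hk.monotone (show (⟨min a jj, Nat.lt_succ_of_le (min_le_right a jj)⟩ : Fin (jj+1))
      ≤ ⟨min b jj, Nat.lt_succ_of_le (min_le_right b jj)⟩ from by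
        simp only [Fin.mk_le_mk]; omega)
    exact this
  have hkv_strict : ∀ a b : ℕ, a < b → b ≤ jj → kv a < kv b := by
    intro a b hab hb
    exact hk (show (⟨min a jj, _⟩ : Fin (jj+1)) < ⟨min b jj, _⟩ by
      simp [Fin.lt_def]; omega)
  have hkv_le_n : ∀ l, kv l ≤ n := fun l => Nat.lt_succ_iff.1 (k _).isLt
  have hk0 : kv 0 = (k 0).val := by simpa using hkv_fin 0
  set sb : ℕ → ℕ := fun l => if l = 0 then 0 else kv (l - 1) with hsb
  set eb : ℕ → ℕ := fun l => if l ≤ jj then kv l else n with heb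
  set mm : ℕ → ℕ := fun l => eb l - sb l with hmm
  set gg : ∀ l, Fin (mm l) → ℕ :=
    fun l r => if l = 0 then kv 0 - 1 - r.val else sb l + r.val with hgg
  set DD : ∀ l, Set (Fin (mm l) → Fin d → ℤ) :=
    fun l => if l = 0 ∨ l = jj + 1 then Sgam d (mm l) else Stau d (mm l) with hDD
  have hmm0 : mm 0 = kv 0 := by simp [hmm, hsb, heb]
  have hmml : ∀ l, 1 ≤ l → l ≤ jj → mm l = kv l - kv (l - 1) := by
    intro l h1 h2
    simp [hmm, hsb, heb, show l ≠ 0 by omega, h2]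
  have hmmtop : mm (jj + 1) = n - kv jj := by
    simp [hmm, hsb, heb, show ¬ (jj + 1 ≤ jj) by omega]
  -- identification of the three kinds of blocks
  have e0 : finTuple d X (mm 0) (gg 0) ⁻¹' DD 0
      = finTuple d X (kv 0) (fun r => kv 0 - 1 - r.val) ⁻¹' Sgam d (kv 0) := by
    have hD : DD 0 = Sgam d (mm 0) := by simp [hDD]
    rw [hD]
    exact tuple_pre_congr hmm0 _ _ (fun r => by simp [hgg]) (Sgam d)
  have etop : finTuple d X (mm (jj + 1)) (gg (jj + 1)) ⁻¹' DD (jj + 1)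
      = finTuple d X (n - kv jj) (fun r => kv jj + r.val) ⁻¹' Sgam d (n - kv jj) := by
    have hD : DD (jj + 1) = Sgam d (mm (jj + 1)) := by simp [hDD]
    rw [hD]
    exact tuple_pre_congr hmmtop _ _ (fun r => by simp [hgg, hsb]) (Sgam d)
  have emid : ∀ p l : ℕ, l = p + 1 → l ≤ jj →
      finTuple d X (mm l) (gg l) ⁻¹' DD l
        = finTuple d X (kv l - kv p) (fun r => kv p + r.val) ⁻¹' Stau d (kv l - kv p) := by
    rintro p l rfl h2
    have hD : DD (p + 1) = Stau d (mm (p + 1)) := if_neg (by omega)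
    rw [hD]
    exact tuple_pre_congr (by rw [hmml (p+1) (by omega) h2, Nat.add_sub_cancel]) _ _
      (fun r => by simp [hgg, hsb]) (Stau d)
  -- disjointness of the index blocks
  have hdisj : ∀ l₁ l₂, l₁ < l₂ → l₂ < jj + 2 →
      ∀ (i : Fin (mm l₁)) (i' : Fin (mm l₂)), gg l₁ i ≠ gg l₂ i' := by
    intro l₁ l₂ h12 h2 i i'
    have hi := i.isLt
    have hi' := i'.isLt
    have hl₂0 : l₂ ≠ 0 := by omega
    have hg2 : gg l₂ i' = kv (l₂ - 1) + i'.val := by simp [hgg, hsb, hl₂0]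
    have hub : gg l₁ i < kv l₁ := by
      by_cases h : l₁ = 0
      · subst h
        have hi2 : (i : ℕ) < kv 0 := lt_of_lt_of_le hi (le_of_eq hmm0)
        have hgv : gg 0 i = kv 0 - 1 - i.val := by simp [hgg]
        omega
      · have hgv : gg l₁ i = kv (l₁ - 1) + i.val := by simp [hgg, hsb, h]
        have hmv : mm l₁ = kv l₁ - kv (l₁ - 1) := hmml l₁ (by omega) (by omega)
        have hi2 : (i : ℕ) < kv l₁ - kv (l₁ - 1) := lt_of_lt_of_le hi (le_of_eq hmv)
        have := hkv_mono (l₁ - 1) l₁ (by omega)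
        omega
    have hlb : kv l₁ ≤ kv (l₂ - 1) := hkv_mono _ _ (by omega)
    omega
  -- the set identity
  have hA : Aset d X n jj k
      = ⋂ l ∈ Finset.range (jj + 2), finTuple d X (mm l) (gg l) ⁻¹' DD l := by
    ext ω
    simp only [Aset, Set.mem_setOf_eq, Set.mem_iInter, Finset.mem_range]
    rw [← hk0]
    constructor
    · intro hA l hl
      have hWl : ∀ l, l ≤ jj → walk d X (kv l) ω = walk d X (kv 0) ω := by
        intro l hl'
        exact (hA (kv l) (hkv_le_n l)).mpr ⟨⟨l, by omega⟩, (hkv_at l hl').symm⟩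
      rcases Nat.eq_zero_or_pos l with rfl | hl0
      · rw [e0, mem_G0]
        intro u hu hequ
        obtain ⟨i, hi⟩ := (hA u (le_trans (le_of_lt hu) (hkv_le_n 0))).mp hequ
        have hle : kv 0 ≤ kv i.val := hkv_mono 0 i.val (Nat.zero_le _)
        rw [hkv_fin i, hi] at hle
        omega
      · rcases Nat.lt_or_ge l (jj + 1) with hlj | hlj
        · have h2 : l ≤ jj := by omega
          rw [emid (l - 1) l (by omega) h2, mem_Btau _ _ (hkv_mono (l - 1) l (by omega))]
          refine ⟨by rw [hWl l h2, hWl (l - 1) (by omega)], ?_⟩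
          intro u h3 h4 hequ
          rw [hWl (l - 1) (by omega)] at hequ
          obtain ⟨i, hi⟩ := (hA u (le_trans (le_of_lt h4) (hkv_le_n l))).mp hequ
          have ha : kv (l - 1) < kv i.val := by rw [hkv_fin i, hi]; exact h3
          have hb : kv i.val < kv l := by rw [hkv_fin i, hi]; exact h4
          have hia : l - 1 < i.val := by
            by_contra hcc
            push_neg at hcc
            exact absurd (hkv_mono _ _ hcc) (by omega)
          have hib : i.val < l := by
            by_contra hcc
            push_neg at hcc
            exact absurd (hkv_mono _ _ hcc) (by omega)
          omega
        · have hl' : l = jj + 1 := by omega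
          subst hl'
          rw [etop, mem_Gtail]
          intro u h3 h4 hequ
          rw [hWl jj le_rfl] at hequ
          have h4' : u ≤ n := by have := hkv_le_n jj; omega
          obtain ⟨i, hi⟩ := (hA u h4').mp hequ
          have hle : kv i.val ≤ kv jj := hkv_mono _ _ (by omega)
          rw [hkv_fin i, hi] at hle
          omega
    · intro hB
      have hWl : ∀ l, l ≤ jj → walk d X (kv l) ω = walk d X (kv 0) ω := by
        intro l
        induction l with
        | zero => intro _; rfl
        | succ l ih =>
          intro hl
          have hmid := hB (l + 1) (by omega)
          rw [emid l (l + 1) rfl hl, mem_Btau _ _ (hkv_mono l (l + 1) (by omega))] at hmid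
          exact hmid.1.trans (ih (by omega))
      intro m' hm'
      constructor
      · intro hequ
        by_contra hcne
        push_neg at hcne
        rcases Nat.lt_or_ge m' (kv 0) with h1 | h1
        · have h0 := hB 0 (by omega)
          rw [e0, mem_G0] at h0
          exact h0 m' h1 hequ
        · rcases Nat.lt_or_ge (kv jj) m' with h2 | h2
          · have htop := hB (jj + 1) (by omega)
            rw [etop, mem_Gtail] at htop
            have hn : kv jj + (n - kv jj) = n := by have := hkv_le_n jj; omega
            exact htop m' h2 (by omega) (by rw [hWl jj le_rfl]; exact hequ)
          · have key : ∀ l, l ≤ jj → m' ≤ kv l → False := by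
              intro l
              induction l with
              | zero =>
                intro _ hle
                exact hcne ⟨0, by omega⟩ (by rw [← hkv_at 0 (by omega)]; omega)
              | succ l ih =>
                intro hl hle
                rcases Nat.lt_or_ge (kv l) m' with h3 | h3
                · rcases eq_or_lt_of_le hle with he | hlt
                  · exact hcne ⟨l + 1, by omega⟩ (by rw [← hkv_at (l + 1) hl]; omega)
                  · have hmid := hB (l + 1) (by omega)
                    rw [emid l (l + 1) rfl hl,
                      mem_Btau _ _ (hkv_mono l (l + 1) (by omega))] at hmid
                    exact hmid.2 m' h3 hlt (by rw [hWl l (by omega)]; exact hequ)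
                · exact ih (by omega) h3
            exact key jj le_rfl h2
      · rintro ⟨i, rfl⟩
        rw [← hkv_fin i]
        exact hWl i.val (Nat.lt_succ_iff.1 i.isLt)
  rw [hA, indep_blocks hmeas hindep (jj + 2) mm gg hdisj DD]
  rw [Finset.prod_range_succ, Finset.prod_range_succ']
  have hF0 : μ (finTuple d X (mm 0) (gg 0) ⁻¹' DD 0)
      = μ {ω | ∀ t : ℕ, 1 ≤ t → t ≤ (k 0).val → walk d X t ω ≠ 0} := by
    rw [e0, meas_gam hmeas hindep hident _ _
      (fun a b h => Fin.ext (by have := a.isLt; have := b.isLt; omega)), hk0]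
  have hFtop : μ (finTuple d X (mm (jj + 1)) (gg (jj + 1)) ⁻¹' DD (jj + 1))
      = μ {ω | ∀ t : ℕ, 1 ≤ t → t ≤ n - (k (Fin.last jj)).val → walk d X t ω ≠ 0} := by
    have hlast : kv jj = (k (Fin.last jj)).val := hkv_fin (Fin.last jj)
    rw [etop, meas_gam hmeas hindep hident _ _
      (fun a b h => Fin.ext (by have := a.isLt; have := b.isLt; omega)), hlast]
  have hFmid : ∀ l ∈ Finset.range jj,
      μ (finTuple d X (mm (l + 1)) (gg (l + 1)) ⁻¹' DD (l + 1))
        = μ {ω | walk d X (kv (l + 1) - kv l) ω = 0 ∧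
            ∀ i : ℕ, 1 ≤ i → i < kv (l + 1) - kv l → walk d X i ω ≠ 0} := by
    intro l hl
    rw [Finset.mem_range] at hl
    rw [emid l (l + 1) rfl (by omega), meas_tau hmeas hindep hident _ _
      (fun a b h => Fin.ext (by have := a.isLt; have := b.isLt; omega))]
  rw [Finset.prod_congr rfl hFmid, hF0, hFtop]
  have hmid2 : (∏ l : Fin jj,
      μ {ω | walk d X ((k l.succ).val - (k l.castSucc).val) ω = 0 ∧
        ∀ i : ℕ, 1 ≤ i → i < (k l.succ).val - (k l.castSucc).val → walk d X i ω ≠ 0})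
      = ∏ l ∈ Finset.range jj,
        μ {ω | walk d X (kv (l + 1) - kv l) ω = 0 ∧
            ∀ i : ℕ, 1 ≤ i → i < kv (l + 1) - kv l → walk d X i ω ≠ 0} := by
    rw [← Fin.prod_univ_eq_prod_range]
    refine Finset.prod_congr rfl fun i _ => ?_
    have h1 : kv (i.val + 1) = (k i.succ).val := hkv_at _ (by omega)
    have h2 : kv i.val = (k i.castSucc).val := hkv_at _ (by omega)
    rw [h1, h2]
  rw [hmid2]
  ring

lemma walk_measurable (hmeas : ∀ i, Measurable (X i)) (m : ℕ) :
    Measurable (walk d X m) := by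
  unfold walk
  exact Finset.measurable_sum _ (fun i _ => hmeas i)

lemma Aset_measurable (hmeas : ∀ i, Measurable (X i)) (n jj : ℕ)
    (k : Fin (jj + 1) → Fin (n + 1)) : MeasurableSet (Aset d X n jj k) := by
  have h : Aset d X n jj k = ⋂ m' ∈ Finset.range (n + 1),
      (fun ω => (walk d X m' ω, walk d X (k 0).val ω)) ⁻¹'
        {p : (Fin d → ℤ) × (Fin d → ℤ) | p.1 = p.2 ↔ ∃ i, (k i).val = m'} := by
    ext ω
    simp only [Aset, Set.mem_setOf_eq, Set.mem_iInter, Finset.mem_range, Set.mem_preimage,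
      Nat.lt_succ_iff]
  rw [h]
  exact MeasurableSet.biInter (Finset.range (n + 1)).countable_toSet fun m' _ =>
    ((walk_measurable hmeas m').prodMk (walk_measurable hmeas _)) (measurableSet_all _)

lemma Q_eq_sum (n jj : ℕ) (ω : Ω) :
    Qfun d X n (jj + 1) ω =
      ∑ k ∈ Finset.univ.filter
          (fun k : Fin (jj + 1) → Fin (n + 1) => ∀ a b : Fin (jj + 1), a < b → k a < k b),
        (Aset d X n jj k).indicator (fun _ => (1 : ℝ)) ω := by
  classical
  unfold Qfun
  have hloc : ∀ x, localTime d X n x ω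
      = (Finset.filter (fun i => walk d X i ω = x) (Finset.range (n + 1))).card := by
    intro x; rw [Finset.card_filter]; rfl
  set T' : Finset (Fin d → ℤ) := (Finset.range (n + 1)).image (fun i => walk d X i ω) with hT'
  have hsupp : ∀ x ∉ T', (if localTime d X n x ω = jj + 1 then (1 : ℝ) else 0) = 0 := by
    intro x hx
    rw [if_neg]
    intro hl
    have hcard : (Finset.filter (fun i => walk d X i ω = x) (Finset.range (n + 1))).card
        = jj + 1 := by rw [← hloc x, hl]
    obtain ⟨i, hi⟩ := Finset.card_pos.mp (by omega : 0 < (Finset.filter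
      (fun i => walk d X i ω = x) (Finset.range (n + 1))).card)
    rw [Finset.mem_filter] at hi
    exact hx (Finset.mem_image.mpr ⟨i, hi.1, hi.2⟩)
  rw [tsum_eq_sum hsupp, Finset.sum_boole]
  have hR : (∑ k ∈ Finset.univ.filter
      (fun k : Fin (jj + 1) → Fin (n + 1) => ∀ a b : Fin (jj + 1), a < b → k a < k b),
        (Aset d X n jj k).indicator (fun _ => (1 : ℝ)) ω)
      = (((Finset.univ.filter
        (fun k : Fin (jj + 1) → Fin (n + 1) => ∀ a b : Fin (jj + 1), a < b → k a < k b)).filter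
          (fun k => ω ∈ Aset d X n jj k)).card : ℝ) := by
    simp only [Set.indicator_apply]
    rw [Finset.sum_boole]
  rw [hR, Nat.cast_inj]
  refine (Finset.card_bij (fun k _ => walk d X (k 0).val ω) ?_ ?_ ?_).symm
  · -- maps into
    rintro k hk
    rw [Finset.mem_filter] at hk
    obtain ⟨hk1, hA⟩ := hk
    rw [Finset.mem_filter] at hk1
    have hmono : StrictMono k := fun a b h => hk1.2 a b h
    rw [Finset.mem_filter]
    constructor
    · exact Finset.mem_image.mpr ⟨(k 0).val, Finset.mem_range.mpr (k 0).isLt, rfl⟩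
    · rw [hloc]
      have hset : Finset.filter (fun i => walk d X i ω = walk d X (k 0).val ω)
          (Finset.range (n + 1)) = Finset.image (fun i => (k i).val) Finset.univ := by
        ext m'
        simp only [Finset.mem_filter, Finset.mem_range, Finset.mem_image, Finset.mem_univ,
          true_and, Nat.lt_succ_iff]
        constructor
        · rintro ⟨h1, h2⟩
          exact (hA m' h1).mp h2
        · rintro ⟨i, rfl⟩
          exact ⟨Nat.lt_succ_iff.mp (k i).isLt, (hA (k i).val
            (Nat.lt_succ_iff.mp (k i).isLt)).mpr ⟨i, rfl⟩⟩
      rw [hset, Finset.card_image_of_injective _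
        (show Function.Injective (fun i : Fin (jj+1) => (k i).val) from
          fun a b h => hmono.injective (Fin.val_injective h)),
        Finset.card_univ, Fintype.card_fin]
  · -- injectivity
    intro k1 hk1 k2 hk2 hval
    rw [Finset.mem_filter] at hk1 hk2
    obtain ⟨hk1f, hA1⟩ := hk1
    obtain ⟨hk2f, hA2⟩ := hk2
    rw [Finset.mem_filter] at hk1f hk2f
    have hm1 : StrictMono k1 := fun a b h => hk1f.2 a b h
    have hm2 : StrictMono k2 := fun a b h => hk2f.2 a b h
    have hval' : walk d X (k1 0).val ω = walk d X (k2 0).val ω := hval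
    set x := walk d X (k1 0).val ω with hx
    set s := Finset.filter (fun i => walk d X i ω = x) (Finset.range (n + 1)) with hs
    have hset1 : s = Finset.image (fun i => (k1 i).val) Finset.univ := by
      ext m'
      simp only [hs, Finset.mem_filter, Finset.mem_range, Finset.mem_image, Finset.mem_univ,
        true_and, Nat.lt_succ_iff]
      constructor
      · rintro ⟨h1, h2⟩; exact (hA1 m' h1).mp h2
      · rintro ⟨i, rfl⟩
        exact ⟨Nat.lt_succ_iff.mp (k1 i).isLt, (hA1 (k1 i).val
          (Nat.lt_succ_iff.mp (k1 i).isLt)).mpr ⟨i, rfl⟩⟩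
    have hset2 : s = Finset.image (fun i => (k2 i).val) Finset.univ := by
      ext m'
      simp only [hs, Finset.mem_filter, Finset.mem_range, Finset.mem_image, Finset.mem_univ,
        true_and, Nat.lt_succ_iff]
      constructor
      · rintro ⟨h1, h2⟩
        exact (hA2 m' h1).mp (h2.trans hval')
      · rintro ⟨i, rfl⟩
        exact ⟨Nat.lt_succ_iff.mp (k2 i).isLt,
          ((hA2 (k2 i).val (Nat.lt_succ_iff.mp (k2 i).isLt)).mpr ⟨i, rfl⟩).trans hval'.symm⟩
    have hcard : s.card = jj + 1 := by
      rw [hset1, Finset.card_image_of_injective _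
        (show Function.Injective (fun i : Fin (jj+1) => (k1 i).val) from
          fun a b h => hm1.injective (Fin.val_injective h)),
        Finset.card_univ, Fintype.card_fin]
    have hmemb1 : ∀ i, (fun i => (k1 i).val) i ∈ s := by
      intro i; rw [hset1]; exact Finset.mem_image_of_mem _ (Finset.mem_univ i)
    have hmemb2 : ∀ i, (fun i => (k2 i).val) i ∈ s := by
      intro i; rw [hset2]; exact Finset.mem_image_of_mem _ (Finset.mem_univ i)
    have e1 := Finset.orderEmbOfFin_unique hcard hmemb1
      (Fin.val_strictMono.comp hm1)
    have e2 := Finset.orderEmbOfFin_unique hcard hmemb2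
      (Fin.val_strictMono.comp hm2)
    funext i
    exact Fin.val_injective ((congrFun e1 i).trans (congrFun e2 i).symm)
  · -- surjectivity
    intro x hx
    rw [Finset.mem_filter] at hx
    obtain ⟨hxT, hxl⟩ := hx
    rw [hloc] at hxl
    set s := Finset.filter (fun i => walk d X i ω = x) (Finset.range (n + 1)) with hs
    have hsub : ∀ {m'}, m' ∈ s → m' < n + 1 := fun hm' =>
      Finset.mem_range.mp (Finset.mem_filter.mp hm').1
    set k : Fin (jj + 1) → Fin (n + 1) :=
      fun i => ⟨s.orderEmbOfFin hxl i, hsub (Finset.orderEmbOfFin_mem s hxl i)⟩ with hkdef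
    have hmono : StrictMono k := by
      intro a b hab
      exact (s.orderEmbOfFin hxl).strictMono hab
    have hwalkk : ∀ i, walk d X (k i).val ω = x := by
      intro i
      exact (Finset.mem_filter.mp (Finset.orderEmbOfFin_mem s hxl i)).2
    refine ⟨k, ?_, hwalkk 0⟩
    rw [Finset.mem_filter]
    refine ⟨Finset.mem_filter.mpr ⟨Finset.mem_univ _, fun a b h => hmono h⟩, ?_⟩
    intro m' hm'
    rw [hwalkk 0]
    constructor
    · intro hw
      have hms : m' ∈ s := by
        rw [hs, Finset.mem_filter, Finset.mem_range]
        exact ⟨Nat.lt_succ_iff.mpr hm', hw⟩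
      have : m' ∈ Set.range (s.orderEmbOfFin hxl) := by
        rw [Finset.range_orderEmbOfFin]
        exact hms
      obtain ⟨i, hi⟩ := this
      exact ⟨i, hi⟩
    · rintro ⟨i, rfl⟩
      exact hwalkk i

lemma integral_Q (hmeas : ∀ i, Measurable (X i)) (n jj : ℕ) :
    ∫ ω, Qfun d X n (jj + 1) ω ∂μ =
      ∑ k ∈ Finset.univ.filter
          (fun k : Fin (jj + 1) → Fin (n + 1) => ∀ a b : Fin (jj + 1), a < b → k a < k b),
        (μ (Aset d X n jj k)).toReal := by
  classical
  rw [integral_congr_ae (ae_of_all μ (Q_eq_sum n jj))]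
  rw [integral_finset_sum _ (fun k _ =>
    (integrable_const (1 : ℝ)).indicator (Aset_measurable hmeas n jj k))]
  refine Finset.sum_congr rfl fun k _ => ?_
  exact integral_indicator_one (Aset_measurable hmeas n jj k)


end Aux

/-- Representation of `E[Q_n(j)]` as a sum over `0 ≤ k_1 < ... < k_j ≤ n` of
`γ_{k_1} (Π_{i=1}^{j-1} P(τ = k_{i+1} - k_i)) γ_{n-k_j}`. -/
theorem stmt14
    {Ω : Type*} [MeasurableSpace Ω] (μ : Measure Ω) [IsProbabilityMeasure μ]
    (d : ℕ) (hd : 1 ≤ d)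
    (X : ℕ → Ω → (Fin d → ℤ))
    (hmeas : ∀ i, Measurable (X i))
    (hindep : iIndepFun X μ)
    (hident : ∀ i, μ.map (X i) = μ.map (X 0))
    (n j : ℕ) (hj : 1 ≤ j) :
    ∫ ω, Qfun d X n j ω ∂μ =
      ∑ k ∈ Finset.univ.filter
          (fun k : Fin j → Fin (n + 1) => ∀ a b : Fin j, a < b → k a < k b),
        gamSeq d μ X (k ⟨0, by omega⟩ : Fin (n + 1)).val *
          (∏ i : Fin (j - 1),
            tauEqProb d μ X
              ((k ⟨i.val + 1, by have := i.isLt; omega⟩).val -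
                (k ⟨i.val, by have := i.isLt; omega⟩).val)) *
          gamSeq d μ X (n - (k ⟨j - 1, by omega⟩ : Fin (n + 1)).val) := by
  obtain ⟨jj, rfl⟩ : ∃ jj, j = jj + 1 := ⟨j - 1, by omega⟩
  rw [integral_Q hmeas n jj]
  simp only [Nat.add_sub_cancel]
  refine Finset.sum_congr rfl fun k hk => ?_
  rw [Finset.mem_filter] at hk
  have hmono : StrictMono k := fun a b h => hk.2 a b h
  have hres := meas_A hmeas hindep hident n jj k hmono
  rw [hres, ENNReal.toReal_mul, ENNReal.toReal_mul, ENNReal.toReal_prod]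
  rfl

end
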